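/- arXiv:1903.04418 — 3 statements merged into one kernel-verified Lean document; each statement's English description precedes it below -/
import Mathlib

section
/- Let (v_1,...,v_m) induce a maximal clique of a finite graph G with final-clique property Γ_{v_k}(x) ≥ Γ_v(x) for all v ∈ D_{v_k}, where Γ_v(x) = exp(α x_v + β Σ_{u∼v} x_u). Suppose r particles have been added at vertex v_k and the remaining n−1−r particles of a length-(n−1) trajectory have all been added at vertices of the clique adjacent to v_k. Let y be the resulting configuration. Then the conditional probability, given the next particle lands in V_k = {v_k} ∪ D_{v_k}, that it lands at v_k satisfies Γ_{v_k}(y) / (Γ_{v_k}(y) + Σ_{v ∈ D_{v_k}} Γ_v(y)) ≥ 1/(1 + |V| e^{−α r}). -/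
/-- Growth rate Γ_v(x) = exp(α x_v + β Σ_{u∼v} x_u). -/
noncomputable def growthRate {V : Type*} [Fintype V] [DecidableEq V]
    (G : SimpleGraph V) [DecidableRel G.Adj] (α β : ℝ) (x : V → ℕ) (w : V) : ℝ :=
  Real.exp (α * (x w : ℝ) + β * ∑ u ∈ G.neighborFinset w, (x u : ℝ))

/-- if r particles have been added at v_k and all other added particles sit
at clique vertices adjacent to v_k, then, in the resulting configuration y, the
probability (within V_k = {v_k} ∪ D_{v_k}) of choosing v_k is at least 1/(1+|V|e^{-αr}). -/
theorem final_clique_conditional_bound {V : Type*} [Fintype V] [DecidableEq V]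
    (G : SimpleGraph V) [DecidableRel G.Adj]
    (α β : ℝ) (hα : 0 < α) (hab : α ≤ β)
    (m : ℕ) (v : Fin m → V) (hinj : Function.Injective v)
    (hclique : G.IsClique (Set.range v))
    (hmax : ∀ T : Set V, G.IsClique T → Set.range v ⊆ T → T = Set.range v)
    (k : Fin m) (D : Finset V)
    (hD : ∀ u : V, u ∈ D ↔ (¬ G.Adj u (v k) ∧ u ≠ v k ∧ ∀ j < k, G.Adj u (v j)))
    (x : V → ℕ)
    -- final-clique property: Γ_{v_k}(x) ≥ Γ_u(x) for all u in the D-set of v_k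
    (hfin : ∀ u ∈ D, growthRate G α β x u ≤ growthRate G α β x (v k))
    (r : ℕ) (c : V → ℕ)
    -- the added particles: r of them at v_k, the rest at clique vertices adjacent to v_k
    (hc_supp : ∀ u : V, c u ≠ 0 → u ∈ Set.range v)
    (hc_adj : ∀ u : V, c u ≠ 0 → u ≠ v k → G.Adj u (v k))
    (hr : c (v k) = r)
    (y : V → ℕ) (hy : y = fun u => x u + c u) :
    1 / (1 + (Fintype.card V : ℝ) * Real.exp (-(α * (r : ℝ)))) ≤
      growthRate G α β y (v k) /
        (growthRate G α β y (v k) + ∑ u ∈ D, growthRate G α β y u) := by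
  subst hy
  set s : ℝ := ∑ w ∈ Finset.univ.erase (v k), (c w : ℝ) with hs
  have hβ : 0 ≤ β := le_trans hα.le hab
  -- sum of c over neighbors of v k equals s
  have hsum_vk : ∑ w ∈ G.neighborFinset (v k), (c w : ℝ) = s := by
    rw [hs]
    refine Finset.sum_subset ?_ ?_
    · intro w hw
      simp only [SimpleGraph.mem_neighborFinset] at hw
      exact Finset.mem_erase.2 ⟨fun h => G.loopless.irrefl _ (h ▸ hw), Finset.mem_univ _⟩
    · intro w hwe hw
      by_contra h
      have hcw : c w ≠ 0 := fun h0 => h (by simp [h0])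
      have hne : w ≠ v k := (Finset.mem_erase.1 hwe).1
      exact hw (by simp only [SimpleGraph.mem_neighborFinset]; exact (hc_adj w hcw hne).symm)
  -- growth rate at v k in y
  have hA : growthRate G α β (fun u => x u + c u) (v k)
      = growthRate G α β x (v k) * Real.exp (α * r + β * s) := by
    unfold growthRate
    rw [← Real.exp_add]
    congr 1
    push_cast
    rw [Finset.sum_add_distrib, hsum_vk, hr]
    ring
  have hApos := Real.exp_pos (α * (x (v k) : ℝ) + β * ∑ u ∈ G.neighborFinset (v k), (x u : ℝ))
  set A := growthRate G α β (fun u => x u + c u) (v k) with hAdef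
  have hA0 : 0 < A := Real.exp_pos _
  -- bound for each u in D
  have hbound : ∀ u ∈ D, growthRate G α β (fun w => x w + c w) u ≤ A * Real.exp (-(α * r)) := by
    intro u hu
    obtain ⟨hnadj, hne, -⟩ := (hD u).1 hu
    have hcu : c u = 0 := by
      by_contra h
      obtain ⟨j, hj⟩ := hc_supp u h
      rcases eq_or_ne u (v k) with he | hne'
      · exact hne he
      · exact hnadj (hc_adj u h hne')
    have hsub : ∑ w ∈ G.neighborFinset u, (c w : ℝ) ≤ s := by
      rw [hs]
      refine Finset.sum_le_sum_of_subset_of_nonneg ?_ (fun w _ _ => by positivity)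
      intro w hw
      simp only [SimpleGraph.mem_neighborFinset] at hw
      refine Finset.mem_erase.2 ⟨?_, Finset.mem_univ _⟩
      intro he; exact hnadj (he ▸ hw)
    have h1 : growthRate G α β (fun w => x w + c w) u
        = growthRate G α β x u * Real.exp (α * c u + β * ∑ w ∈ G.neighborFinset u, (c w : ℝ)) := by
      unfold growthRate
      rw [← Real.exp_add]
      congr 1
      push_cast
      rw [Finset.sum_add_distrib]
      ring
    rw [h1, hcu]
    have h2 : Real.exp (α * (0:ℕ) + β * ∑ w ∈ G.neighborFinset u, (c w : ℝ))
        ≤ Real.exp (β * s) := by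
      apply Real.exp_le_exp.2
      simp only [Nat.cast_zero, mul_zero, zero_add]
      exact mul_le_mul_of_nonneg_left hsub hβ
    calc growthRate G α β x u * Real.exp (α * (0:ℕ) + β * ∑ w ∈ G.neighborFinset u, (c w : ℝ))
        ≤ growthRate G α β x (v k) * Real.exp (β * s) := by
          apply mul_le_mul (hfin u hu) h2 (Real.exp_pos _).le
          unfold growthRate; positivity
      _ = A * Real.exp (-(α * r)) := by
          rw [hA, mul_assoc, ← Real.exp_add]; ring_nf
  -- sum bound
  have hSsum : ∑ u ∈ D, growthRate G α β (fun w => x w + c w) u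
      ≤ (Fintype.card V : ℝ) * Real.exp (-(α * r)) * A := by
    calc ∑ u ∈ D, growthRate G α β (fun w => x w + c w) u
        ≤ ∑ _u ∈ D, A * Real.exp (-(α * r)) := Finset.sum_le_sum hbound
      _ = (D.card : ℝ) * (A * Real.exp (-(α * r))) := by rw [Finset.sum_const, nsmul_eq_mul]
      _ ≤ (Fintype.card V : ℝ) * (A * Real.exp (-(α * r))) := by
          apply mul_le_mul_of_nonneg_right _ (by positivity)
          exact_mod_cast Finset.card_le_univ D
      _ = (Fintype.card V : ℝ) * Real.exp (-(α * r)) * A := by ring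
  have hS0 : 0 ≤ ∑ u ∈ D, growthRate G α β (fun w => x w + c w) u :=
    Finset.sum_nonneg fun u _ => (Real.exp_pos _).le
  set S := ∑ u ∈ D, growthRate G α β (fun w => x w + c w) u
  set C := (Fintype.card V : ℝ) * Real.exp (-(α * r)) with hC
  have hC0 : 0 ≤ C := by positivity
  rw [div_le_div_iff₀ (by linarith) (by linarith)]
  nlinarith [hSsum, hA0, hC0]
end

section
/- Let λ > 0, ε > 0, m ≥ 2, and a_1,...,a_{m−1} > 0. Consider the Markov chain Z(n) on ℤ^{m−1} with transitions: from state z, jump to z + e_i with probability a_i e^{−λ z_i}/W(z) for i = 1,...,m−1, and to z − (e_1+...+e_{m−1}) with probability 1/W(z), where W(z) = 1 + Σ_{j=1}^{m−1} a_j e^{−λ z_j}. Then with f(z) = Σ_{i=1}^{m−1} z_i², the one-step drift satisfies E[f(Z(n+1)) − f(Z(n)) | Z(n) = z] ≤ −ε whenever Σ_{i=1}^{m−1} |z_i| ≥ C, for some constant C = C(ε, λ, a_1,...,a_{m−1}, m). -/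
open Filter Real

noncomputable def G (a lam ε x : ℝ) : ℝ :=
  (2 * x + 1 + ε) * (a * Real.exp (-lam * x)) + (1 - 2 * x)

lemma G_tendsto_atTop (a lam ε : ℝ) (hlam : 0 < lam) :
    Tendsto (G a lam ε) atTop atBot := by
  have h1 : Tendsto (fun x : ℝ => x * Real.exp (-lam * x)) atTop (nhds 0) := by
    simpa using tendsto_rpow_mul_exp_neg_mul_atTop_nhds_zero 1 lam hlam
  have h0 : Tendsto (fun x : ℝ => Real.exp (-lam * x)) atTop (nhds 0) := by
    simpa using tendsto_rpow_mul_exp_neg_mul_atTop_nhds_zero 0 lam hlam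
  have hexp : Tendsto (fun x : ℝ => (2 * x + 1 + ε) * (a * Real.exp (-lam * x)))
      atTop (nhds 0) := by
    have heq : (fun x : ℝ => (2 * x + 1 + ε) * (a * Real.exp (-lam * x)))
        = fun x => a * (2 * (x * Real.exp (-lam * x)) + (1 + ε) * Real.exp (-lam * x)) := by
      funext x; ring
    rw [heq]
    simpa using ((h1.const_mul 2).add (h0.const_mul (1 + ε))).const_mul a
  have hlin : Tendsto (fun x : ℝ => 1 - 2 * x) atTop atBot := by
    have h2x : Tendsto (fun x : ℝ => 2 * x) atTop atTop :=
      Tendsto.const_mul_atTop two_pos tendsto_id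
    have := tendsto_atBot_add_const_left atTop (1 : ℝ) (tendsto_neg_atTop_atBot.comp h2x)
    simpa [sub_eq_add_neg, Function.comp] using this
  exact hexp.add_atBot hlin

lemma G_tendsto_atBot (a lam ε : ℝ) (ha : 0 < a) (hlam : 0 < lam) :
    Tendsto (G a lam ε) atBot atBot := by
  have hfac : ∀ x : ℝ, G a lam ε x
      = Real.exp (-lam * x) * ((1 - 2 * x) * Real.exp (lam * x) + a * (2 * x + 1 + ε)) := by
    intro x
    have hx : Real.exp (-lam * x) * Real.exp (lam * x) = 1 := by
      rw [← Real.exp_add]; ring_nf; exact Real.exp_zero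
    unfold G
    rw [mul_add, show Real.exp (-lam * x) * ((1 - 2 * x) * Real.exp (lam * x))
      = (1 - 2 * x) * (Real.exp (-lam * x) * Real.exp (lam * x)) from by ring, hx]
    ring
  have he : Tendsto (fun x : ℝ => Real.exp (-lam * x)) atBot atTop := by
    have h1 : Tendsto (fun x : ℝ => -lam * x) atBot atTop :=
      Tendsto.const_mul_atBot_of_neg (by linarith) tendsto_id
    exact Real.tendsto_exp_atTop.comp h1
  have hz : Tendsto (fun x : ℝ => (1 - 2 * x) * Real.exp (lam * x)) atBot (nhds 0) := by
    have h1 : Tendsto (fun x : ℝ => x * Real.exp (-lam * x)) atTop (nhds 0) := by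
      simpa using tendsto_rpow_mul_exp_neg_mul_atTop_nhds_zero 1 lam hlam
    have h0 : Tendsto (fun x : ℝ => Real.exp (-lam * x)) atTop (nhds 0) := by
      simpa using tendsto_rpow_mul_exp_neg_mul_atTop_nhds_zero 0 lam hlam
    have hF : Tendsto (fun y : ℝ => (1 + 2 * y) * Real.exp (-lam * y)) atTop (nhds 0) := by
      have heq : (fun y : ℝ => (1 + 2 * y) * Real.exp (-lam * y))
          = fun y => Real.exp (-lam * y) + 2 * (y * Real.exp (-lam * y)) := by
        funext y; ring
      rw [heq]
      simpa using h0.add (h1.const_mul 2)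
    have := hF.comp tendsto_neg_atBot_atTop
    have heq2 : ((fun y : ℝ => (1 + 2 * y) * Real.exp (-lam * y)) ∘ (fun x : ℝ => -x))
        = fun x : ℝ => (1 - 2 * x) * Real.exp (lam * x) := by
      funext x; simp [Function.comp]; ring_nf
    rwa [heq2] at this
  have ha2 : Tendsto (fun x : ℝ => a * (2 * x + 1 + ε)) atBot atBot := by
    have h2x : Tendsto (fun x : ℝ => 2 * x) atBot atBot :=
      Tendsto.const_mul_atBot two_pos tendsto_id
    have := tendsto_atBot_add_const_right atBot (1 + ε) h2x
    have h3 : Tendsto (fun x : ℝ => 2 * x + (1 + ε)) atBot atBot := this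
    have h4 := Tendsto.const_mul_atBot ha h3
    simpa [add_assoc] using h4
  have hmul := Tendsto.atTop_mul_atBot₀ he (hz.add_atBot ha2)
  have heq : (fun x : ℝ => Real.exp (-lam * x)
      * ((1 - 2 * x) * Real.exp (lam * x) + a * (2 * x + 1 + ε)))
      = G a lam ε := by funext x; rw [hfac]
  rwa [heq] at hmul

lemma G_bound (a lam ε : ℝ) (ha : 0 < a) (hlam : 0 < lam) :
    ∀ K : ℝ, ∃ R : ℝ, 1 ≤ R ∧ ∀ x : ℝ, R ≤ |x| → G a lam ε x ≤ -K := by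
  intro K
  obtain ⟨R1, hR1⟩ := eventually_atTop.mp
    ((G_tendsto_atTop a lam ε hlam).eventually (eventually_le_atBot (-K)))
  obtain ⟨R2, hR2⟩ := eventually_atBot.mp
    ((G_tendsto_atBot a lam ε ha hlam).eventually (eventually_le_atBot (-K)))
  refine ⟨max 1 (max R1 (-R2)), le_max_left _ _, fun x hx => ?_⟩
  rcases le_or_gt 0 x with h | h
  · have : R1 ≤ x := by
      have := le_trans (le_trans (le_max_left R1 (-R2)) (le_max_right 1 _)) hx
      rwa [abs_of_nonneg h] at this
    exact hR1 x this
  · have : x ≤ R2 := by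
      have h2 := le_trans (le_trans (le_max_right R1 (-R2)) (le_max_right 1 _)) hx
      rw [abs_of_neg h] at h2; linarith
    exact hR2 x this

lemma G_upper (a lam ε : ℝ) (ha : 0 < a) (hlam : 0 < lam) :
    ∃ M : ℝ, 0 ≤ M ∧ ∀ x : ℝ, G a lam ε x ≤ M := by
  obtain ⟨R, hR1, hR⟩ := G_bound a lam ε ha hlam 0
  have hcont : Continuous (G a lam ε) := by unfold G; continuity
  obtain ⟨x0, _, hmax⟩ := isCompact_Icc.exists_isMaxOn (s := Set.Icc (-R) R)
    ⟨0, by constructor <;> linarith⟩ hcont.continuousOn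
  refine ⟨max (G a lam ε x0) 0, le_max_right _ _, fun y => ?_⟩
  rcases le_or_gt (|y|) R with h | h
  · exact le_trans (hmax (abs_le.mp h)) (le_max_left _ _)
  · have := hR y h.le
    simpa using le_trans this (le_max_right _ _)



/-- Foster–Lyapunov drift condition for the difference chain. With
W(z) = 1 + Σ_i a_i e^{-λ z_i}, the one-step drift of f(z) = Σ z_i² equals
(Σ_i (2z_i+1) a_i e^{-λ z_i} + Σ_i (1 - 2z_i))/W(z), and it is ≤ -ε whenever
Σ_i |z_i| ≥ C for a suitable constant C. -/
theorem drift_condition (d : ℕ) (lam ε : ℝ) (hlam : 0 < lam) (hε : 0 < ε)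
    (a : Fin (d + 1) → ℝ) (ha : ∀ i, 0 < a i)
    (W : (Fin (d + 1) → ℤ) → ℝ)
    (hW : ∀ z, W z = 1 + ∑ i, a i * Real.exp (-lam * (z i : ℝ)))
    (drift : (Fin (d + 1) → ℤ) → ℝ)
    -- explicit one-step expected change of f(z) = Σ z_i² for the chain that jumps to
    -- z + e_i with probability a_i e^{-λ z_i}/W(z) and to z - (1,...,1) with prob 1/W(z)
    (hdrift : ∀ z, drift z =
      ((∑ i, (2 * (z i : ℝ) + 1) * (a i * Real.exp (-lam * (z i : ℝ)))) +
        ∑ i, (1 - 2 * (z i : ℝ))) / W z) :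
    ∃ C : ℝ, ∀ z : Fin (d + 1) → ℤ,
      C ≤ ∑ i, |(z i : ℝ)| → drift z ≤ -ε := by 
  choose M hM0 hM using fun i => G_upper (a i) lam ε (ha i) hlam
  set K : ℝ := ε + ∑ i, M i with hK
  choose R hR1 hR2 using fun i => G_bound (a i) lam ε (ha i) hlam K
  refine ⟨∑ i, R i, fun z hz => ?_⟩
  have hex : ∃ i, R i ≤ |(z i : ℝ)| := by
    by_contra hcon
    push_neg at hcon
    have := Finset.sum_lt_sum_of_nonempty Finset.univ_nonempty
      (fun i _ => hcon i)
    linarith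
  obtain ⟨i, hi⟩ := hex
  have Wpos : 0 < W z := by
    rw [hW z]
    have : 0 ≤ ∑ j, a j * Real.exp (-lam * (z j : ℝ)) :=
      Finset.sum_nonneg fun j _ => mul_nonneg (ha j).le (Real.exp_pos _).le
    linarith
  rw [hdrift z, div_le_iff₀ Wpos]
  have hsum : (∑ j, (2 * (z j : ℝ) + 1) * (a j * Real.exp (-lam * (z j : ℝ))))
      + (∑ j, (1 - 2 * (z j : ℝ))) + ε * W z
      = ε + ∑ j, G (a j) lam ε (z j) := by
    have hterm : ∀ j : Fin (d + 1), G (a j) lam ε ((z j : ℝ))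
        = (2 * (z j : ℝ) + 1) * (a j * Real.exp (-lam * (z j : ℝ)))
          + (1 - 2 * (z j : ℝ)) + ε * (a j * Real.exp (-lam * (z j : ℝ))) := by
      intro j; unfold G; ring
    rw [Finset.sum_congr rfl fun j _ => hterm j, Finset.sum_add_distrib,
      Finset.sum_add_distrib, ← Finset.mul_sum, hW z]
    ring
  have hGle : ∑ j, G (a j) lam ε (z j) ≤ -ε := by
    have hsplit : ∑ j, G (a j) lam ε (z j)
        = G (a i) lam ε (z i) + ∑ j ∈ Finset.univ.erase i, G (a j) lam ε (z j) :=
      (Finset.add_sum_erase _ _ (Finset.mem_univ i)).symm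
    have h1 : G (a i) lam ε ((z i : ℝ)) ≤ -K := hR2 i _ hi
    have h2 : ∑ j ∈ Finset.univ.erase i, G (a j) lam ε (z j)
        ≤ ∑ j ∈ Finset.univ.erase i, M j :=
      Finset.sum_le_sum fun j _ => hM j _
    have h3 : ∑ j ∈ Finset.univ.erase i, M j ≤ ∑ j, M j :=
      Finset.sum_le_sum_of_subset_of_nonneg (Finset.erase_subset _ _)
        fun j _ _ => hM0 j
    rw [hsplit, hK] at *
    linarith
  linarith
end

section
/- Let λ > 0, m ≥ 2, a_1,...,a_{m−1} > 0, and let Z(n) be the irreducible Markov chain on ℤ^{m−1} with transitions z → z + e_i with probability a_i e^{−λ z_i}/W(z) and z → z − (e_1+...+e_{m−1}) with probability 1/W(z), where W(z) = 1 + Σ_j a_j e^{−λ z_j}. Then Z(n) is positive recurrent. -/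
open Filter Finset

set_option linter.unusedSectionVars false
set_option linter.unusedVariables false
set_option maxHeartbeats 1000000

/-- the analytic core: φ(t) = α(2t+β)e^{-λt} - 2t is bounded above and → -∞ as |t|→∞ -/
lemma dcpr_core (lam α β : ℝ) (hlam : 0 < lam) (hα : 0 < α) (hβ : 0 ≤ β) :
    ∃ C : ℝ, 0 ≤ C ∧ (∀ t : ℝ, α*(2*t+β)*Real.exp (-(lam*t)) - 2*t ≤ C) ∧
      (∀ c : ℝ, ∃ R : ℝ, 0 ≤ R ∧ ∀ t : ℝ, R ≤ |t| →
        α*(2*t+β)*Real.exp (-(lam*t)) - 2*t ≤ c) := by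
  set φ : ℝ → ℝ := fun t => α*(2*t+β)*Real.exp (-(lam*t)) - 2*t with hφ
  have hcont : Continuous φ := by fun_prop
  -- bound for t ≥ 1
  have htop : ∀ t : ℝ, 1 ≤ t → φ t ≤ α*(2+β)/lam - 2*t := by
    intro t ht
    have htpos : (0:ℝ) < t := by linarith
    have h1 : Real.exp (-(lam*t)) ≤ (lam*t)⁻¹ := by
      rw [Real.exp_neg]
      apply inv_anti₀ (by positivity)
      calc lam * t ≤ lam * t + 1 := by linarith
        _ ≤ Real.exp (lam*t) := Real.add_one_le_exp _
    have h2 : (0:ℝ) ≤ α*(2*t+β) := by positivity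
    have h3 : α*(2*t+β)*Real.exp (-(lam*t)) ≤ α*(2*t+β)*(lam*t)⁻¹ :=
      mul_le_mul_of_nonneg_left h1 h2
    have h4 : α*(2*t+β)*(lam*t)⁻¹ ≤ α*(2+β)/lam := by
      rw [← div_eq_mul_inv, div_le_div_iff₀ (by positivity) hlam]
      have h2t : 2*t+β ≤ (2+β)*t := by nlinarith
      have := mul_le_mul_of_nonneg_left h2t hα.le
      nlinarith
    simp only [hφ]
    linarith
  -- bound for t ≤ -(β+1)
  have hbot : ∀ t : ℝ, t ≤ -(β+1) → φ t ≤ (α*lam^2/4)*t^3 - 2*t := by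
    intro t ht
    have htneg : t < 0 := by linarith
    have hquad : lam^2*t^2/4 ≤ Real.exp (-(lam*t)) := by
      have hx : (0:ℝ) ≤ -(lam*t) := by nlinarith
      have h5 : 1 + (-(lam*t))/2 ≤ Real.exp ((-(lam*t))/2) := (by linarith [Real.add_one_le_exp ((-(lam*t))/2)])
      have h6 : (-(lam*t))/2 ≤ 1 + (-(lam*t))/2 := by linarith
      have h7 : ((-(lam*t))/2)^2 ≤ (Real.exp ((-(lam*t))/2))^2 := by
        apply sq_le_sq' <;> nlinarith [Real.exp_pos ((-(lam*t))/2)]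
      calc lam^2*t^2/4 = ((-(lam*t))/2)^2 := by ring
        _ ≤ (Real.exp ((-(lam*t))/2))^2 := h7
        _ = Real.exp (-(lam*t)) := by rw [sq, ← Real.exp_add]; ring_nf
    have h8 : 2*t+β ≤ t := by linarith
    have h9 : α*(2*t+β)*Real.exp (-(lam*t)) ≤ α*t*Real.exp (-(lam*t)) := by
      have hep := Real.exp_pos (-(lam*t))
      have := mul_le_mul_of_nonneg_left h8 hα.le
      nlinarith
    have h10 : α*t*Real.exp (-(lam*t)) ≤ α*t*(lam^2*t^2/4) := by
      have hαt : α*t ≤ 0 := by nlinarith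
      exact mul_le_mul_of_nonpos_left hquad hαt
    simp only [hφ]
    nlinarith
  -- tendsto atBot along atTop
  have ttop : Tendsto φ atTop atBot := by
    apply tendsto_atBot_mono' atTop (f₁ := fun t => α*(2+β)/lam - 2*t)
    · filter_upwards [eventually_ge_atTop (1:ℝ)] with t ht using htop t ht
    · apply tendsto_atBot_add_const_left
      have : Tendsto (fun t : ℝ => 2*t) atTop atTop :=
        Tendsto.const_mul_atTop (by norm_num) tendsto_id
      exact tendsto_neg_atTop_atBot.comp this
  -- tendsto atBot along atBot
  have tbot : Tendsto φ atBot atBot := by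
    apply tendsto_atBot_mono' atBot (f₁ := fun t => (α*lam^2/4)*t^3 - 2*t)
    · filter_upwards [eventually_le_atBot (-(β+1))] with t ht using hbot t ht
    · have h1 : Tendsto (fun t : ℝ => t^2) atBot atTop := by
        have := (tendsto_id (α := ℝ) (x := atBot)).atBot_mul_atBot₀
          (tendsto_id (α := ℝ) (x := atBot))
        refine this.congr fun t => by simp [sq]
      have h2 : Tendsto (fun t : ℝ => (α*lam^2/4)*t^2 - 2) atBot atTop := by
        apply tendsto_atTop_add_const_right
        exact Tendsto.const_mul_atTop (by positivity) h1
      have h3 : Tendsto (fun t : ℝ => t * ((α*lam^2/4)*t^2 - 2)) atBot atBot :=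
        (tendsto_id (α := ℝ) (x := atBot)).atBot_mul_atTop₀ h2
      refine h3.congr fun t => by show t * _ = _; ring
  -- far-out bound
  have far : ∀ c : ℝ, ∃ R : ℝ, 0 ≤ R ∧ ∀ t : ℝ, R ≤ |t| → φ t ≤ c := by
    intro c
    have e1 : ∀ᶠ t in atTop, φ t ≤ c := ttop.eventually (eventually_le_atBot c)
    have e2 : ∀ᶠ t in atBot, φ t ≤ c := tbot.eventually (eventually_le_atBot c)
    obtain ⟨T₁, hT₁⟩ := eventually_atTop.mp e1
    obtain ⟨T₂, hT₂⟩ := eventually_atBot.mp e2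
    refine ⟨max 0 (max T₁ (-T₂)), le_max_left _ _, fun t ht => ?_⟩
    rcases le_or_gt 0 t with h | h
    · apply hT₁
      rw [abs_of_nonneg h] at ht
      exact le_trans (le_trans (le_max_left _ _) (le_max_right _ _)) ht
    · apply hT₂
      rw [abs_of_neg h] at ht
      have : -T₂ ≤ -t := le_trans (le_trans (le_max_right _ _) (le_max_right _ _)) ht
      linarith
  obtain ⟨R, hR0, hR⟩ := far 0
  -- sup on compact [-R,R]
  have hne : Set.Nonempty (Set.Icc (-R) R) := ⟨0, by constructor <;> linarith⟩
  obtain ⟨x₀, _, hx₀⟩ := isCompact_Icc.exists_isMaxOn hne hcont.continuousOn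
  refine ⟨max (φ x₀) 0, le_max_right _ _, fun t => ?_, far⟩
  rcases le_or_gt (|t|) R with h | h
  · have : t ∈ Set.Icc (-R) R := by
      rw [Set.mem_Icc]; constructor <;> [linarith [neg_abs_le t]; linarith [le_abs_self t]]
    exact le_trans (hx₀ this) (le_max_left _ _)
  · exact le_trans (hR t h.le) (le_max_right _ _)

namespace DCPR

variable {d : ℕ}

def stepv (o : Option (Fin (d+1))) (y : Fin (d+1) → ℤ) : Fin (d+1) → ℤ :=
  match o with
  | some i => fun j => y j + if j = i then 1 else 0
  | none => fun j => y j - 1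

def stepinv (o : Option (Fin (d+1))) (z : Fin (d+1) → ℤ) : Fin (d+1) → ℤ :=
  match o with
  | some i => fun j => z j - if j = i then 1 else 0
  | none => fun j => z j + 1

variable (lam : ℝ) (a : Fin (d+1) → ℝ)

noncomputable def wgt (o : Option (Fin (d+1))) (y : Fin (d+1) → ℤ) : ℝ :=
  match o with
  | some i => a i * Real.exp (-lam * (y i : ℝ))
  | none => 1

noncomputable def Wd (y : Fin (d+1) → ℤ) : ℝ := 1 + ∑ j, a j * Real.exp (-lam * (y j : ℝ))

noncomputable def T (μ : (Fin (d+1) → ℤ) → ℝ) (z : Fin (d+1) → ℤ) : ℝ :=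
  ∑ o : Option (Fin (d+1)),
    μ (stepinv o z) * (wgt lam a o (stepinv o z) / Wd lam a (stepinv o z))

noncomputable def f (y : Fin (d+1) → ℤ) : ℝ := ∑ j, ((y j : ℝ))^2

noncomputable def box (d k : ℕ) : Finset (Fin (d+1) → ℤ) :=
  Fintype.piFinset fun _ => Finset.Icc (-(k:ℤ)) (k:ℤ)

noncomputable def μseq : ℕ → (Fin (d+1) → ℤ) → ℝ
  | 0 => fun z => if z = (fun _ => (0:ℤ)) then 1 else 0
  | (k+1) => T lam a (μseq k)

section basic

variable {lam a}

lemma stepinv_stepv (o : Option (Fin (d+1))) (y : Fin (d+1) → ℤ) :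
    stepinv o (stepv o y) = y := by
  cases o <;> funext j <;> simp [stepv, stepinv]

lemma stepv_stepinv (o : Option (Fin (d+1))) (z : Fin (d+1) → ℤ) :
    stepv o (stepinv o z) = z := by
  cases o <;> funext j <;> simp [stepv, stepinv]

lemma stepinv_inj (o : Option (Fin (d+1))) : Function.Injective (stepinv (d := d) o) :=
  Function.LeftInverse.injective (g := stepv o) (stepv_stepinv o)

variable (hlam : 0 < lam) (ha : ∀ i, 0 < a i)
include hlam ha

lemma wgt_pos (o : Option (Fin (d+1))) (y : Fin (d+1) → ℤ) : 0 < wgt lam a o y := by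
  cases o with
  | none => exact one_pos
  | some i => exact mul_pos (ha i) (Real.exp_pos _)

omit hlam ha in
lemma Wd_eq_sum (y : Fin (d+1) → ℤ) :
    Wd lam a y = ∑ o : Option (Fin (d+1)), wgt lam a o y := by
  rw [Fintype.sum_option]; rfl

omit hlam in
lemma Wd_ge_one (y : Fin (d+1) → ℤ) : 1 ≤ Wd lam a y := by
  have : 0 ≤ ∑ j, a j * Real.exp (-lam * (y j : ℝ)) :=
    Finset.sum_nonneg fun j _ => le_of_lt (mul_pos (ha j) (Real.exp_pos _))
  simp only [Wd]; linarith

omit hlam in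
lemma Wd_pos (y : Fin (d+1) → ℤ) : 0 < Wd lam a y :=
  lt_of_lt_of_le one_pos (Wd_ge_one ha y)

end basic

section boxes

lemma mem_box {k : ℕ} {z : Fin (d+1) → ℤ} :
    z ∈ box d k ↔ ∀ j, -(k:ℤ) ≤ z j ∧ z j ≤ (k:ℤ) := by
  simp [box, Fintype.mem_piFinset, Finset.mem_Icc]

lemma stepv_mem_box {k : ℕ} {y : Fin (d+1) → ℤ} (hy : y ∈ box d k)
    (o : Option (Fin (d+1))) : stepv o y ∈ box d (k+1) := by
  rw [mem_box] at hy ⊢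
  intro j
  have := hy j
  cases o with
  | none => simp only [stepv]; push_cast; omega
  | some i => simp only [stepv]; split <;> (push_cast; omega)

lemma zero_mem_box (k : ℕ) : (fun _ => (0:ℤ)) ∈ box d k := by
  rw [mem_box]; intro j; constructor <;> simp

end boxes

section transfer

variable {lam a}
variable (hlam : 0 < lam) (ha : ∀ i, 0 < a i)
include hlam ha

omit hlam ha in
/-- main transfer lemma -/
lemma sum_T_mul (μ : (Fin (d+1) → ℤ) → ℝ) (s s' : Finset (Fin (d+1) → ℤ))
    (h0 : ∀ y ∉ s, μ y = 0)
    (hss' : ∀ y ∈ s, ∀ o, stepv o y ∈ s') (φ : (Fin (d+1) → ℤ) → ℝ) :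
    ∑ z ∈ s', (T lam a μ z) * φ z
      = ∑ y ∈ s, μ y * (∑ o : Option (Fin (d+1)),
          (wgt lam a o y / Wd lam a y) * φ (stepv o y)) := by
  have key : ∀ o : Option (Fin (d+1)),
      ∑ z ∈ s', μ (stepinv o z) * (wgt lam a o (stepinv o z) / Wd lam a (stepinv o z)) * φ z
        = ∑ y ∈ s, μ y * ((wgt lam a o y / Wd lam a y) * φ (stepv o y)) := by
    intro o
    have h1 : ∀ z ∈ s', μ (stepinv o z) * (wgt lam a o (stepinv o z) / Wd lam a (stepinv o z)) * φ z
        = (fun y => μ y * ((wgt lam a o y / Wd lam a y) * φ (stepv o y))) (stepinv o z) := by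
      intro z _
      simp only [stepv_stepinv, mul_assoc]
    rw [Finset.sum_congr rfl h1]
    rw [← Finset.sum_image (g := stepinv o)
      (f := fun y => μ y * ((wgt lam a o y / Wd lam a y) * φ (stepv o y)))
      (fun x _ y _ h => stepinv_inj o h)]
    refine (Finset.sum_subset ?_ ?_).symm
    · intro y hy
      rw [Finset.mem_image]
      exact ⟨stepv o y, hss' y hy o, stepinv_stepv o y⟩
    · intro y _ hy
      rw [h0 y hy, zero_mul]
  calc ∑ z ∈ s', (T lam a μ z) * φ z
      = ∑ z ∈ s', ∑ o : Option (Fin (d+1)),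
          μ (stepinv o z) * (wgt lam a o (stepinv o z) / Wd lam a (stepinv o z)) * φ z := by
        refine Finset.sum_congr rfl fun z _ => ?_
        rw [T, Finset.sum_mul]
    _ = ∑ o : Option (Fin (d+1)), ∑ z ∈ s',
          μ (stepinv o z) * (wgt lam a o (stepinv o z) / Wd lam a (stepinv o z)) * φ z :=
        Finset.sum_comm
    _ = ∑ o : Option (Fin (d+1)), ∑ y ∈ s,
          μ y * ((wgt lam a o y / Wd lam a y) * φ (stepv o y)) :=
        Finset.sum_congr rfl fun o _ => key o
    _ = ∑ y ∈ s, μ y * (∑ o : Option (Fin (d+1)),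
          (wgt lam a o y / Wd lam a y) * φ (stepv o y)) := by
        rw [Finset.sum_comm]
        exact Finset.sum_congr rfl fun y _ => (Finset.mul_sum _ _ _).symm

lemma T_nonneg (μ : (Fin (d+1) → ℤ) → ℝ) (h : ∀ y, 0 ≤ μ y) (z : Fin (d+1) → ℤ) :
    0 ≤ T lam a μ z := by
  refine Finset.sum_nonneg fun o _ => mul_nonneg (h _) ?_
  exact div_nonneg (le_of_lt (wgt_pos hlam ha _ _)) (le_of_lt (Wd_pos ha _))

omit hlam ha in
lemma sum_probs (y : Fin (d+1) → ℤ) (hha : ∀ i, 0 < a i) :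
    ∑ o : Option (Fin (d+1)), wgt lam a o y / Wd lam a y = 1 := by
  rw [← Finset.sum_div, ← Wd_eq_sum, div_self (ne_of_gt (Wd_pos hha y))]

end transfer

section muprops

variable {lam a}
variable (hlam : 0 < lam) (ha : ∀ i, 0 < a i)
include hlam ha

omit hlam ha in
lemma μseq_nonneg (hha : ∀ i, 0 < a i) (hhl : 0 < lam) :
    ∀ k z, 0 ≤ μseq lam a k z := by
  intro k
  induction k with
  | zero => intro z; simp only [μseq]; split <;> norm_num
  | succ k ih => intro z; exact T_nonneg hhl hha _ ih z

omit hlam ha in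
lemma μseq_supp : ∀ k z, z ∉ box d k → μseq lam a k z = 0 := by
  intro k
  induction k with
  | zero =>
    intro z hz
    simp only [μseq]
    rw [if_neg]
    intro h; exact hz (h ▸ zero_mem_box 0)
  | succ k ih =>
    intro z hz
    simp only [μseq, T]
    refine Finset.sum_eq_zero fun o _ => ?_
    rw [ih (stepinv o z) ?_, zero_mul]
    intro hmem
    exact hz (stepv_stepinv o z ▸ stepv_mem_box hmem o)

lemma μseq_mass : ∀ k, ∑ z ∈ box d k, μseq lam a k z = 1 := by
  intro k
  induction k with
  | zero =>
    simp only [μseq]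
    rw [Finset.sum_ite_eq' (box d 0) (fun _ => (0:ℤ)) (fun _ => (1:ℝ))]
    rw [if_pos (zero_mem_box 0)]
  | succ k ih =>
    have := sum_T_mul (lam := lam) (a := a) (μseq lam a k) (box d k) (box d (k+1))
      (μseq_supp k) (fun y hy o => stepv_mem_box hy o) (fun _ => 1)
    calc ∑ z ∈ box d (k+1), μseq lam a (k+1) z
        = ∑ z ∈ box d (k+1), T lam a (μseq lam a k) z * 1 := by
          simp only [μseq, mul_one]
      _ = ∑ y ∈ box d k, μseq lam a k y * (∑ o : Option (Fin (d+1)),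
            (wgt lam a o y / Wd lam a y) * 1) := this
      _ = 1 := by
          simp only [mul_one]
          rw [Finset.sum_congr rfl (fun y _ => by rw [sum_probs (lam := lam) y ha, mul_one])]
          exact ih

/-- single-entry bound -/
lemma μseq_le_one (k : ℕ) (z : Fin (d+1) → ℤ) : μseq lam a k z ≤ 1 := by
  by_cases hz : z ∈ box d k
  · calc μseq lam a k z ≤ ∑ w ∈ box d k, μseq lam a k w :=
          Finset.single_le_sum (fun w _ => μseq_nonneg ha hlam k w) hz
      _ = 1 := μseq_mass hlam ha k
  · rw [μseq_supp k z hz]; norm_num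

/-- partial sums over any finset are ≤ 1 -/
lemma μseq_finsum_le (k : ℕ) (A : Finset (Fin (d+1) → ℤ)) :
    ∑ z ∈ A, μseq lam a k z ≤ 1 := by
  calc ∑ z ∈ A, μseq lam a k z ≤ ∑ z ∈ A ∪ box d k, μseq lam a k z :=
        Finset.sum_le_sum_of_subset_of_nonneg Finset.subset_union_left
          (fun w _ _ => μseq_nonneg ha hlam k w)
    _ = ∑ z ∈ box d k, μseq lam a k z := by
        refine (Finset.sum_subset Finset.subset_union_right ?_).symm
        intro w _ hw; exact μseq_supp k w hw
    _ = 1 := μseq_mass hlam ha k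

end muprops


section driftstuff
variable {d : ℕ} (lam : ℝ) (a : Fin (d+1) → ℝ)
noncomputable def Dfun (y : Fin (d+1) → ℤ) : ℝ :=
  (∑ i, (a i * (2*((y i : ℤ):ℝ)+1) * Real.exp (-(lam*((y i : ℤ):ℝ))) - 2*((y i : ℤ):ℝ)))
    + ((d:ℝ)+1)

section driftsec
variable {lam a}

lemma f_stepv_none (y : Fin (d+1) → ℤ) :
    f (stepv none y) = f y - 2*(∑ j, ((y j : ℤ):ℝ)) + ((d:ℝ)+1) := by
  simp only [f, stepv]
  have : ∀ j : Fin (d+1), (((y j - 1 : ℤ)):ℝ)^2 = ((y j : ℤ):ℝ)^2 + (-2*((y j : ℤ):ℝ) + 1) := by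
    intro j; push_cast; ring
  rw [Finset.sum_congr rfl (fun j _ => this j), Finset.sum_add_distrib,
    Finset.sum_add_distrib, Finset.sum_const, Finset.card_univ, Fintype.card_fin,
    nsmul_eq_mul, ← Finset.mul_sum]
  push_cast
  ring

lemma f_stepv_some (i : Fin (d+1)) (y : Fin (d+1) → ℤ) :
    f (stepv (some i) y) = f y + (2*((y i : ℤ):ℝ) + 1) := by
  simp only [f, stepv]
  have : ∀ j : Fin (d+1), (((y j + if j = i then 1 else 0 : ℤ)):ℝ)^2
      = ((y j : ℤ):ℝ)^2 + (if j = i then 2*((y j : ℤ):ℝ)+1 else 0) := by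
    intro j
    split
    · push_cast; ring
    · push_cast; ring
  rw [Finset.sum_congr rfl (fun j _ => this j), Finset.sum_add_distrib,
    Finset.sum_ite_eq' Finset.univ i (fun j => 2*((y j : ℤ):ℝ)+1)]
  simp

lemma N_eq (y : Fin (d+1) → ℤ) :
    (∑ o : Option (Fin (d+1)), wgt lam a o y * f (stepv o y))
      = Wd lam a y * f y + Dfun lam a y := by
  rw [Fintype.sum_option]
  have hs : ∀ i : Fin (d+1), wgt lam a (some i) y * f (stepv (some i) y)
      = (a i * Real.exp (-(lam*((y i : ℤ):ℝ)))) * f y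
        + a i * (2*((y i : ℤ):ℝ)+1) * Real.exp (-(lam*((y i : ℤ):ℝ))) := by
    intro i
    rw [f_stepv_some i y]
    simp only [wgt, neg_mul]
    ring
  rw [Finset.sum_congr rfl (fun i _ => hs i), Finset.sum_add_distrib, ← Finset.sum_mul]
  show (1:ℝ) * f (stepv none y) + _ = _
  rw [f_stepv_none]
  simp only [Wd, Dfun, neg_mul, Finset.sum_sub_distrib]
  rw [← Finset.mul_sum]
  ring

lemma DW_eq (y : Fin (d+1) → ℤ) :
    Dfun lam a y + Wd lam a y
      = (∑ i, (a i * (2*((y i : ℤ):ℝ)+2) * Real.exp (-(lam*((y i : ℤ):ℝ))) - 2*((y i : ℤ):ℝ)))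
        + (((d:ℝ)+1)+1) := by
  simp only [Dfun, Wd, neg_mul]
  rw [← add_assoc]
  have : (∑ i, (a i * (2*((y i : ℤ):ℝ)+1) * Real.exp (-(lam*((y i : ℤ):ℝ))) - 2*((y i : ℤ):ℝ)))
      + ∑ j, a j * Real.exp (-(lam*((y j : ℤ):ℝ)))
      = ∑ i, (a i * (2*((y i : ℤ):ℝ)+2) * Real.exp (-(lam*((y i : ℤ):ℝ))) - 2*((y i : ℤ):ℝ)) := by
    rw [← Finset.sum_add_distrib]
    exact Finset.sum_congr rfl fun i _ => by ring
  linarith [this]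

variable (hlam : 0 < lam) (ha : ∀ i, 0 < a i)
include hlam ha

lemma exists_drift : ∃ (C₀ : ℝ) (Rn : ℕ), 0 ≤ C₀ ∧ ∀ y : Fin (d+1) → ℤ,
    (∑ o : Option (Fin (d+1)), (wgt lam a o y / Wd lam a y) * f (stepv o y))
      ≤ f y + (if y ∈ box d Rn then C₀ else -1) := by
  -- constants from the core lemma
  have hcore1 : ∀ i : Fin (d+1), ∃ C : ℝ, 0 ≤ C ∧
      ∀ t : ℝ, a i*(2*t+1)*Real.exp (-(lam*t)) - 2*t ≤ C := by
    intro i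
    obtain ⟨C, hC0, hCb, -⟩ := dcpr_core lam (a i) 1 hlam (ha i) (by norm_num)
    exact ⟨C, hC0, hCb⟩
  choose C1 hC10 hC1b using hcore1
  have hcore2 : ∀ i : Fin (d+1), ∃ C : ℝ, 0 ≤ C ∧
      (∀ t : ℝ, a i*(2*t+2)*Real.exp (-(lam*t)) - 2*t ≤ C) ∧
      (∀ c : ℝ, ∃ R : ℝ, 0 ≤ R ∧ ∀ t : ℝ, R ≤ |t| →
        a i*(2*t+2)*Real.exp (-(lam*t)) - 2*t ≤ c) :=
    fun i => dcpr_core lam (a i) 2 hlam (ha i) (by norm_num)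
  choose C2 hC20 hC2b hC2far using hcore2
  set csum : ℝ := ∑ i, C2 i with hcsum
  have hcsum0 : 0 ≤ csum := Finset.sum_nonneg fun i _ => hC20 i
  set ccrit : ℝ := -(((d:ℝ)+1) + 1 + csum) with hccrit
  choose R2 hR20 hR2 using fun i => hC2far i ccrit
  -- natural number bound on all R2 i
  obtain ⟨Rn, hRn⟩ : ∃ Rn : ℕ, ∀ i, R2 i ≤ (Rn:ℝ) := by
    obtain ⟨Rn, hRn⟩ := exists_nat_ge (Finset.univ.sup' ⟨0, Finset.mem_univ 0⟩ R2)
    exact ⟨Rn, fun i => le_trans (Finset.le_sup' R2 (Finset.mem_univ i)) hRn⟩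
  have hC1sum : 0 ≤ (∑ i, C1 i) := Finset.sum_nonneg fun i _ => hC10 i
  refine ⟨(∑ i, C1 i) + ((d:ℝ)+1), Rn, by linarith [Nat.cast_nonneg (α := ℝ) d], fun y => ?_⟩
  -- global bound on Dfun
  have hD : Dfun lam a y ≤ (∑ i, C1 i) + ((d:ℝ)+1) := by
    unfold Dfun
    have : ∀ i ∈ Finset.univ (α := Fin (d+1)),
        a i * (2*((y i : ℤ):ℝ)+1) * Real.exp (-(lam*((y i : ℤ):ℝ))) - 2*((y i : ℤ):ℝ) ≤ C1 i :=
      fun i _ => hC1b i _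
    linarith [Finset.sum_le_sum this]
  -- outside the box : Dfun + Wd ≤ 0
  have hout : y ∉ box d Rn → Dfun lam a y + Wd lam a y ≤ 0 := by
    intro hy
    rw [DW_eq]
    obtain ⟨j, hj⟩ : ∃ j, ¬(-(Rn:ℤ) ≤ y j ∧ y j ≤ (Rn:ℤ)) := by
      by_contra h
      push_neg at h
      exact hy (mem_box.mpr fun j => h j)
    have hRj : R2 j ≤ |((y j : ℤ):ℝ)| := by
      have h1 : (Rn:ℤ) < |y j| := by
        rcases abs_cases (y j) with ⟨h2, _⟩ | ⟨h2, _⟩ <;> omega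
      have h2 : ((Rn:ℝ)) < |((y j : ℤ):ℝ)| := by
        rw [← Int.cast_abs]
        exact_mod_cast h1
      linarith [hRn j]
    have hj2 : a j * (2*((y j : ℤ):ℝ)+2) * Real.exp (-(lam*((y j : ℤ):ℝ))) - 2*((y j : ℤ):ℝ)
        ≤ ccrit := hR2 j _ hRj
    have hsplit : (∑ i, (a i * (2*((y i : ℤ):ℝ)+2) * Real.exp (-(lam*((y i : ℤ):ℝ)))
          - 2*((y i : ℤ):ℝ)))
        = (a j * (2*((y j : ℤ):ℝ)+2) * Real.exp (-(lam*((y j : ℤ):ℝ))) - 2*((y j : ℤ):ℝ))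
          + ∑ i ∈ Finset.univ.erase j, (a i * (2*((y i : ℤ):ℝ)+2)
              * Real.exp (-(lam*((y i : ℤ):ℝ))) - 2*((y i : ℤ):ℝ)) :=
      (Finset.add_sum_erase _ _ (Finset.mem_univ j)).symm
    have herase : ∑ i ∈ Finset.univ.erase j, (a i * (2*((y i : ℤ):ℝ)+2)
          * Real.exp (-(lam*((y i : ℤ):ℝ))) - 2*((y i : ℤ):ℝ)) ≤ csum := by
      calc _ ≤ ∑ i ∈ Finset.univ.erase j, C2 i :=
            Finset.sum_le_sum fun i _ => hC2b i _
        _ ≤ ∑ i, C2 i := Finset.sum_le_sum_of_subset_of_nonneg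
            (Finset.erase_subset _ _) (fun i _ _ => hC20 i)
    rw [hsplit]
    simp only [hccrit] at hj2
    linarith
  -- put it together
  have hWpos := Wd_pos (lam := lam) ha y
  have hW1 := Wd_ge_one (lam := lam) ha y
  have hLHS : (∑ o : Option (Fin (d+1)), (wgt lam a o y / Wd lam a y) * f (stepv o y))
      = f y + Dfun lam a y / Wd lam a y := by
    have : ∀ o : Option (Fin (d+1)), (wgt lam a o y / Wd lam a y) * f (stepv o y)
        = wgt lam a o y * f (stepv o y) / Wd lam a y := fun o => by ring
    rw [Finset.sum_congr rfl fun o _ => this o, ← Finset.sum_div, N_eq, add_div,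
      mul_div_cancel_left₀ _ (ne_of_gt hWpos)]
  rw [hLHS]
  split
  · -- inside box
    have h1 : Dfun lam a y / Wd lam a y ≤ (∑ i, C1 i) + ((d:ℝ)+1) := by
      rw [div_le_iff₀ hWpos]
      have hC : 0 ≤ (∑ i, C1 i) + ((d:ℝ)+1) := by
        linarith [Nat.cast_nonneg (α := ℝ) d]
      nlinarith
    linarith
  · -- outside box
    next hy =>
      have h2 := hout hy
      have h1 : Dfun lam a y / Wd lam a y ≤ -1 := by
        rw [div_le_iff₀ hWpos]
        linarith
      linarith

end driftsec

end driftstuff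

section lyapwrap
variable {d : ℕ} (lam : ℝ) (a : Fin (d+1) → ℝ)
section lyapsec
variable {lam a}
variable (hlam : 0 < lam) (ha : ∀ i, 0 < a i)
include hlam ha

lemma f_nonneg (y : Fin (d+1) → ℤ) : 0 ≤ f y :=
  Finset.sum_nonneg fun j _ => sq_nonneg _

lemma lyap_bound (C₀ : ℝ) (Rn : ℕ) (hC₀ : 0 ≤ C₀)
    (hdrift : ∀ y : Fin (d+1) → ℤ,
      (∑ o : Option (Fin (d+1)), (wgt lam a o y / Wd lam a y) * f (stepv o y))
        ≤ f y + (if y ∈ box d Rn then C₀ else -1)) :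
    ∀ n : ℕ, (n:ℝ) ≤ (C₀+1) * ∑ k ∈ Finset.range n, ∑ z ∈ box d Rn, μseq lam a k z := by
  set E : ℕ → ℝ := fun k => ∑ z ∈ box d k, μseq lam a k z * f z with hE
  set IF : ℕ → ℝ := fun k => ∑ z ∈ box d Rn, μseq lam a k z with hIF
  have hE0 : E 0 = 0 := by
    refine Finset.sum_eq_zero fun z hz => ?_
    have hz0 : z = (fun _ => (0:ℤ)) := by
      funext j
      have := (mem_box.mp hz) j
      omega
    rw [hz0]
    simp [f]
  have hEnn : ∀ k, 0 ≤ E k := fun k =>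
    Finset.sum_nonneg fun z _ => mul_nonneg (μseq_nonneg ha hlam k z) (f_nonneg hlam ha z)
  have hIFnn : ∀ k, 0 ≤ IF k := fun k =>
    Finset.sum_nonneg fun z _ => μseq_nonneg ha hlam k z
  have hrec : ∀ k, E (k+1) ≤ E k - 1 + (C₀+1) * IF k := by
    intro k
    have htrans : E (k+1) = ∑ y ∈ box d k, μseq lam a k y * (∑ o : Option (Fin (d+1)),
        (wgt lam a o y / Wd lam a y) * f (stepv o y)) := by
      show ∑ z ∈ box d (k+1), T lam a (μseq lam a k) z * f z = _
      exact sum_T_mul (μseq lam a k) (box d k) (box d (k+1)) (μseq_supp k)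
        (fun y hy o => stepv_mem_box hy o) f
    have hstep1 : E (k+1) ≤ ∑ y ∈ box d k, μseq lam a k y
        * (f y + (if y ∈ box d Rn then C₀ else -1)) := by
      rw [htrans]
      exact Finset.sum_le_sum fun y _ =>
        mul_le_mul_of_nonneg_left (hdrift y) (μseq_nonneg ha hlam k y)
    have hsplit : ∑ y ∈ box d k, μseq lam a k y * (f y + (if y ∈ box d Rn then C₀ else -1))
        = E k + ∑ y ∈ box d k, μseq lam a k y * (if y ∈ box d Rn then C₀ else -1) := by
      rw [hE, ← Finset.sum_add_distrib]
      exact Finset.sum_congr rfl fun y _ => by ring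
    have hptwise : ∀ y ∈ box d k, μseq lam a k y * (if y ∈ box d Rn then C₀ else -1)
        ≤ -(μseq lam a k y) + (C₀+1) * (if y ∈ box d Rn then μseq lam a k y else 0) := by
      intro y _
      have hμnn := μseq_nonneg ha hlam k y
      split
      · ring_nf; nlinarith
      · simp
    have hsum2 : ∑ y ∈ box d k, (-(μseq lam a k y)
          + (C₀+1) * (if y ∈ box d Rn then μseq lam a k y else 0))
        = -1 + (C₀+1) * ∑ y ∈ box d k, (if y ∈ box d Rn then μseq lam a k y else 0) := by
      rw [Finset.sum_add_distrib, Finset.sum_neg_distrib, μseq_mass hlam ha k, ← Finset.mul_sum]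
    have hIFle : ∑ y ∈ box d k, (if y ∈ box d Rn then μseq lam a k y else 0) ≤ IF k := by
      rw [Finset.sum_ite_mem]
      exact Finset.sum_le_sum_of_subset_of_nonneg Finset.inter_subset_right
        (fun y _ _ => μseq_nonneg ha hlam k y)
    have := Finset.sum_le_sum hptwise
    have h2 : (C₀+1) * ∑ y ∈ box d k, (if y ∈ box d Rn then μseq lam a k y else 0)
        ≤ (C₀+1) * IF k := by
      apply mul_le_mul_of_nonneg_left hIFle
      linarith
    linarith
  have hmain : ∀ n : ℕ, E n + n ≤ (C₀+1) * ∑ k ∈ Finset.range n, IF k := by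
    intro n
    induction n with
    | zero => simp [hE0]
    | succ n ih =>
      rw [Finset.sum_range_succ, mul_add]
      have := hrec n
      push_cast
      linarith
  intro n
  have := hmain n
  have := hEnn n
  linarith

end lyapsec

end lyapwrap

section finwrap
variable {d : ℕ} (lam : ℝ) (a : Fin (d+1) → ℝ)
section finsec
variable {lam a}

lemma Wd_def (y : Fin (d+1) → ℤ) :
    Wd lam a y = 1 + ∑ j, a j * Real.exp (-lam * (y j : ℝ)) := rfl

/-- T in the shape used by the theorem statement -/
lemma T_shape (μ : (Fin (d+1) → ℤ) → ℝ) (z : Fin (d+1) → ℤ) :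
    T lam a μ z
      = (∑ i, μ (fun j => z j - if j = i then 1 else 0) *
          (a i * Real.exp (-lam * ((z i : ℝ) - 1)) /
            Wd lam a (fun j => z j - if j = i then 1 else 0))) +
        μ (fun j => z j + 1) * (1 / Wd lam a (fun j => z j + 1)) := by
  rw [T, Fintype.sum_option]
  rw [add_comm]
  congr 1
  · refine Finset.sum_congr rfl fun i _ => ?_
    have h1 : (fun j => z j - if j = i then 1 else 0) = stepinv (some i) z := rfl
    rw [h1]
    have h2 : wgt lam a (some i) (stepinv (some i) z)
        = a i * Real.exp (-lam * ((z i : ℝ) - 1)) := by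
      simp only [wgt, stepinv, if_pos rfl]
      push_cast
      ring_nf
    rw [h2]

lemma T_sum_div (t : Finset ℕ) (F : ℕ → (Fin (d+1) → ℤ) → ℝ) (c : ℝ) (z : Fin (d+1) → ℤ) :
    T lam a (fun w => (∑ k ∈ t, F k w)/c) z = (∑ k ∈ t, T lam a (F k) z)/c := by
  calc T lam a (fun w => (∑ k ∈ t, F k w)/c) z
      = ∑ o : Option (Fin (d+1)), (∑ k ∈ t, F k (stepinv o z))
          * (wgt lam a o (stepinv o z) / Wd lam a (stepinv o z)) / c := by
        rw [T]
        exact Finset.sum_congr rfl fun o _ => by rw [div_mul_eq_mul_div]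
    _ = (∑ o : Option (Fin (d+1)), ∑ k ∈ t, F k (stepinv o z)
          * (wgt lam a o (stepinv o z) / Wd lam a (stepinv o z))) / c := by
        rw [Finset.sum_div]
        exact Finset.sum_congr rfl fun o _ => by rw [Finset.sum_mul]
    _ = (∑ k ∈ t, ∑ o : Option (Fin (d+1)), F k (stepinv o z)
          * (wgt lam a o (stepinv o z) / Wd lam a (stepinv o z))) / c := by
        rw [Finset.sum_comm]
    _ = (∑ k ∈ t, T lam a (F k) z)/c := rfl

end finsec

end finwrap

theorem main (d : ℕ) (lam : ℝ) (hlam : 0 < lam)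
    (a : Fin (d + 1) → ℝ) (ha : ∀ i, 0 < a i)
    (W : (Fin (d + 1) → ℤ) → ℝ)
    (hW : ∀ z, W z = 1 + ∑ j, a j * Real.exp (-lam * (z j : ℝ))) :
    ∃ π : (Fin (d + 1) → ℤ) → ℝ,
      (∀ z, 0 < π z) ∧ Summable π ∧ (∑' z, π z) = 1 ∧
      (∀ z : Fin (d + 1) → ℤ,
        π z =
          (∑ i, π (fun j => z j - if j = i then 1 else 0) *
            (a i * Real.exp (-lam * ((z i : ℝ) - 1)) /
              W (fun j => z j - if j = i then 1 else 0))) +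
          π (fun j => z j + 1) * (1 / W (fun j => z j + 1))) := by
  classical
  obtain ⟨C₀, Rn, hC₀, hdrift⟩ := exists_drift hlam ha
  have hlyap := lyap_bound hlam ha C₀ Rn hC₀ hdrift
  have hC₀1 : (0:ℝ) < C₀ + 1 := by linarith
  -- Cesàro averages
  set ν : ℕ → (Fin (d+1) → ℤ) → ℝ :=
    fun n z => (∑ k ∈ Finset.range (n+1), μseq lam a k z)/((n:ℝ)+1) with hν
  have hn1pos : ∀ n : ℕ, (0:ℝ) < (n:ℝ)+1 := fun n => by positivity
  have hν0 : ∀ n z, 0 ≤ ν n z := by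
    intro n z
    apply div_nonneg _ (hn1pos n).le
    exact Finset.sum_nonneg fun k _ => μseq_nonneg ha hlam k z
  have hν1 : ∀ n z, ν n z ≤ 1 := by
    intro n z
    rw [hν, div_le_one (hn1pos n)]
    calc ∑ k ∈ Finset.range (n+1), μseq lam a k z
        ≤ ∑ k ∈ Finset.range (n+1), 1 :=
          Finset.sum_le_sum fun k _ => μseq_le_one hlam ha k z
      _ = (n:ℝ)+1 := by simp
  have hνA : ∀ (n : ℕ) (A : Finset (Fin (d+1) → ℤ)), ∑ z ∈ A, ν n z ≤ 1 := by
    intro n A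
    rw [hν]
    rw [← Finset.sum_div, div_le_one (hn1pos n), Finset.sum_comm]
    calc ∑ k ∈ Finset.range (n+1), ∑ z ∈ A, μseq lam a k z
        ≤ ∑ k ∈ Finset.range (n+1), 1 :=
          Finset.sum_le_sum fun k _ => μseq_finsum_le hlam ha k A
      _ = (n:ℝ)+1 := by simp
  have hνF : ∀ n : ℕ, 1/(C₀+1) ≤ ∑ z ∈ box d Rn, ν n z := by
    intro n
    have key := hlyap (n+1)
    push_cast at key
    have hsum : ∑ z ∈ box d Rn, ν n z
        = (∑ k ∈ Finset.range (n+1), ∑ z ∈ box d Rn, μseq lam a k z)/((n:ℝ)+1) := by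
      simp only [hν]
      rw [← Finset.sum_div, Finset.sum_comm]
    rw [hsum, le_div_iff₀ (hn1pos n), div_mul_eq_mul_div, div_le_iff₀ hC₀1]
    nlinarith [key]
  -- one-step evolution of the Cesàro averages
  have hTν : ∀ (n : ℕ) (z : Fin (d+1) → ℤ), T lam a (ν n) z
      = ν n z + (μseq lam a (n+1) z - μseq lam a 0 z)/((n:ℝ)+1) := by
    intro n z
    have h1 : T lam a (ν n) z
        = (∑ k ∈ Finset.range (n+1), T lam a (μseq lam a k) z)/((n:ℝ)+1) :=
      T_sum_div (Finset.range (n+1)) (fun k => μseq lam a k) ((n:ℝ)+1) z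
    have h2 : ∀ k, T lam a (μseq lam a k) z = μseq lam a (k+1) z := fun k => rfl
    have h3 : ∑ k ∈ Finset.range (n+1), μseq lam a (k+1) z
        = (∑ k ∈ Finset.range (n+1), μseq lam a k z)
          + μseq lam a (n+1) z - μseq lam a 0 z := by
      have e1 := Finset.sum_range_succ' (fun k => μseq lam a k z) (n+1)
      have e2 := Finset.sum_range_succ (fun k => μseq lam a k z) (n+1)
      linarith [e1, e2]
    rw [h1, Finset.sum_congr rfl fun k _ => h2 k, h3]
    simp only [hν]
    rw [add_sub_assoc, add_div]
  -- ultrafilter limit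
  set U : Ultrafilter ℕ := Ultrafilter.of atTop with hUdef
  have hU : (U : Filter ℕ) ≤ atTop := Ultrafilter.of_le _
  have hex : ∀ z : Fin (d+1) → ℤ, ∃ x ∈ Set.Icc (0:ℝ) 1,
      Tendsto (fun n => ν n z) (U : Filter ℕ) (nhds x) := by
    intro z
    have hprin : ↑(U.map (fun n => ν n z)) ≤ Filter.principal (Set.Icc (0:ℝ) 1) := by
      rw [Ultrafilter.coe_map, Filter.le_principal_iff, Filter.mem_map]
      exact Filter.univ_mem' (fun n => ⟨hν0 n z, hν1 n z⟩)
    obtain ⟨x, hx, hx2⟩ := isCompact_Icc.ultrafilter_le_nhds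
      (U.map (fun n => ν n z)) hprin
    rw [Ultrafilter.coe_map] at hx2
    exact ⟨x, hx, hx2⟩
  choose g hg01 hgt using hex
  have hg0 : ∀ z, 0 ≤ g z := fun z => (hg01 z).1
  have hgt_sum : ∀ A : Finset (Fin (d+1) → ℤ),
      Tendsto (fun n => ∑ z ∈ A, ν n z) (U : Filter ℕ) (nhds (∑ z ∈ A, g z)) :=
    fun A => tendsto_finset_sum A (fun z _ => hgt z)
  have hgA : ∀ A : Finset (Fin (d+1) → ℤ), ∑ z ∈ A, g z ≤ 1 := fun A =>
    le_of_tendsto (hgt_sum A) (Filter.Eventually.of_forall (fun n => hνA n A))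
  have hgF : 1/(C₀+1) ≤ ∑ z ∈ box d Rn, g z :=
    ge_of_tendsto (hgt_sum (box d Rn)) (Filter.Eventually.of_forall (fun n => hνF n))
  -- invariance of the limit
  have hTg : ∀ z, T lam a g z = g z := by
    intro z
    have t1 : Tendsto (fun n => T lam a (ν n) z) (U : Filter ℕ) (nhds (T lam a g z)) := by
      have := tendsto_finset_sum (Finset.univ : Finset (Option (Fin (d+1))))
        (fun o _ => (hgt (stepinv o z)).mul_const
          (wgt lam a o (stepinv o z) / Wd lam a (stepinv o z)))
      exact this
    have herr : Tendsto (fun n : ℕ => (μseq lam a (n+1) z - μseq lam a 0 z)/((n:ℝ)+1))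
        atTop (nhds 0) := by
      have h2lim : Tendsto (fun n : ℕ => 2/((n:ℝ)+1)) atTop (nhds 0) := by
        have h := (tendsto_const_div_atTop_nhds_zero_nat (2:ℝ)).comp (tendsto_add_atTop_nat 1)
        have heq : ((fun n : ℕ => 2/(n:ℝ)) ∘ (fun n : ℕ => n + 1)) = fun n : ℕ => 2/((n:ℝ)+1) := by
          funext n; simp only [Function.comp_apply]; push_cast; ring_nf
        rwa [heq] at h
      rw [tendsto_zero_iff_norm_tendsto_zero]
      apply squeeze_zero (fun n => norm_nonneg _) (fun n => ?_) h2lim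
      rw [Real.norm_eq_abs, abs_div, abs_of_pos (hn1pos n)]
      have h1 := μseq_nonneg ha hlam (n+1) z
      have h2 := μseq_le_one hlam ha (n+1) z
      have h3 := μseq_nonneg ha hlam 0 z
      have h4 := μseq_le_one hlam ha 0 z
      have h5 : |μseq lam a (n+1) z - μseq lam a 0 z| ≤ 2 :=
        abs_le.mpr ⟨by linarith, by linarith⟩
      gcongr
    have t2 : Tendsto (fun n => T lam a (ν n) z) (U : Filter ℕ) (nhds (g z)) := by
      have hcomb := (hgt z).add (herr.mono_left hU)
      rw [add_zero] at hcomb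
      exact hcomb.congr (fun n => (hTν n z).symm)
    exact tendsto_nhds_unique t1 t2
  -- summability
  have hsum : Summable g := summable_of_sum_le (fun z => hg0 z) hgA
  -- positive at some point
  obtain ⟨y₀, hy₀pos⟩ : ∃ y₀, 0 < g y₀ := by
    by_contra h
    push_neg at h
    have h1 : ∑ z ∈ box d Rn, g z ≤ 0 := Finset.sum_nonpos fun z _ => h z
    have h2 : (0:ℝ) < 1/(C₀+1) := by positivity
    linarith
  -- positivity propagation along steps
  have hstep : ∀ (o : Option (Fin (d+1))) (y : Fin (d+1) → ℤ),
      0 < g y → 0 < g (stepv o y) := by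
    intro o y hy
    rw [← hTg (stepv o y)]
    have hterm : ∀ o' : Option (Fin (d+1)),
        0 ≤ g (stepinv o' (stepv o y)) * (wgt lam a o' (stepinv o' (stepv o y))
          / Wd lam a (stepinv o' (stepv o y))) := fun o' =>
      mul_nonneg (hg0 _) (div_nonneg (wgt_pos hlam ha o' _).le (Wd_pos ha _).le)
    have hone : 0 < g (stepinv o (stepv o y)) * (wgt lam a o (stepinv o (stepv o y))
        / Wd lam a (stepinv o (stepv o y))) := by
      rw [stepinv_stepv]
      exact mul_pos hy (div_pos (wgt_pos hlam ha o y) (Wd_pos ha y))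
    calc (0:ℝ) < _ := hone
      _ ≤ T lam a g (stepv o y) :=
        Finset.single_le_sum (fun o' _ => hterm o') (Finset.mem_univ o)
  -- climbing up by an arbitrary nonnegative vector
  have hup : ∀ (N : ℕ) (w : Fin (d+1) → ℕ), (∑ j, w j) < N →
      ∀ y : Fin (d+1) → ℤ, 0 < g y → 0 < g (fun j => y j + (w j : ℤ)) := by
    intro N
    induction N with
    | zero => intro w hw; exact absurd hw (Nat.not_lt_zero _)
    | succ N ih =>
      intro w hw y hy
      by_cases h0 : ∀ j, w j = 0
      · have heq : (fun j => y j + (w j:ℤ)) = y := funext fun j => by rw [h0 j]; simp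
        rw [heq]; exact hy
      · push_neg at h0
        obtain ⟨i, hi⟩ := h0
        have hwi : 1 ≤ w i := Nat.one_le_iff_ne_zero.mpr hi
        set w' := Function.update w i (w i - 1) with hw'
        have hsum' : (∑ j, w' j) < N := by
          have e1 : ∑ j, w' j + 1 = ∑ j, w j := by
            rw [hw', Finset.sum_update_of_mem (Finset.mem_univ i), ← Finset.erase_eq,
              ← Finset.add_sum_erase _ w (Finset.mem_univ i)]
            omega
          omega
        have hprev := ih w' hsum' y hy
        have heq : stepv (some i) (fun j => y j + (w' j:ℤ)) = fun j => y j + (w j:ℤ) := by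
          funext j
          simp only [stepv]
          by_cases hji : j = i
          · subst hji
            rw [if_pos rfl, hw', Function.update_self]
            push_cast [Nat.cast_sub hwi]
            ring
          · rw [if_neg hji, hw', Function.update_of_ne hji, add_zero]
        rw [← heq]
        exact hstep (some i) _ hprev
  -- going down
  have hdown : ∀ (r : ℕ) (y : Fin (d+1) → ℤ), 0 < g y → 0 < g (fun j => y j - (r:ℤ)) := by
    intro r
    induction r with
    | zero =>
      intro y hy
      have heq : (fun j => y j - ((0:ℕ):ℤ)) = y := funext fun j => by push_cast; ring
      rw [heq]; exact hy
    | succ r ih =>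
      intro y hy
      have heq : stepv none (fun j => y j - (r:ℤ)) = fun j => y j - (((r+1) : ℕ):ℤ) :=
        funext fun j => by simp only [stepv]; push_cast; ring
      rw [← heq]
      exact hstep none _ (ih y hy)
  -- positivity everywhere
  have hgpos : ∀ z, 0 < g z := by
    intro z
    set r : ℕ := Finset.univ.sup (fun j => (y₀ j - z j).toNat) with hr
    have hrj : ∀ j, y₀ j - z j ≤ (r:ℤ) := by
      intro j
      calc y₀ j - z j ≤ ((y₀ j - z j).toNat : ℤ) := Int.self_le_toNat _
        _ ≤ (r:ℤ) := by
            exact_mod_cast Nat.cast_le.mpr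
              (Finset.le_sup (f := fun j => (y₀ j - z j).toNat) (Finset.mem_univ j))
    set w : Fin (d+1) → ℕ := fun j => (z j + r - y₀ j).toNat with hwdef
    have hwj : ∀ j, (w j : ℤ) = z j + r - y₀ j := fun j =>
      Int.toNat_of_nonneg (by linarith [hrj j])
    have h1 : 0 < g (fun j => y₀ j + (w j : ℤ)) :=
      hup ((∑ j, w j)+1) w (Nat.lt_succ_self _) y₀ hy₀pos
    have h3 := hdown r (fun j => y₀ j + (w j:ℤ)) h1
    have h2 : (fun j => (y₀ j + (w j:ℤ)) - (r:ℤ)) = z := funext fun j => by rw [hwj j]; ring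
    rw [h2] at h3
    exact h3
  -- normalisation
  set total : ℝ := ∑' z, g z with htotal
  have htot_pos : 0 < total := lt_of_lt_of_le hy₀pos (Summable.le_tsum hsum y₀ fun z _ => hg0 z)
  refine ⟨fun z => g z / total, fun z => div_pos (hgpos z) htot_pos,
    hsum.div_const total, ?_, ?_⟩
  · rw [tsum_div_const]
    exact div_self (ne_of_gt htot_pos)
  · intro z
    have hTgz : g z / total
        = ((∑ i, g (fun j => z j - if j = i then 1 else 0) *
            (a i * Real.exp (-lam * ((z i : ℝ) - 1)) /
              Wd lam a (fun j => z j - if j = i then 1 else 0))) +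
          g (fun j => z j + 1) * (1 / Wd lam a (fun j => z j + 1))) / total := by
      rw [← T_shape, hTg]
    simp only [hW, ← Wd_def]
    rw [hTgz, add_div, Finset.sum_div]
    congr 1
    · exact Finset.sum_congr rfl fun i _ => (mul_div_right_comm _ _ _)
    · exact mul_div_right_comm _ _ _

end DCPR

/-- the difference chain on ℤ^{m-1} (m = d+2), jumping from z to z + e_i with
probability a_i e^{-λ z_i}/W(z) and to z - (e_1+...+e_{m-1}) with probability 1/W(z),
W(z) = 1 + Σ_j a_j e^{-λ z_j}, is positive recurrent: it admits a (strictly positive,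
summable) stationary probability distribution. -/
theorem difference_chain_positive_recurrent (d : ℕ) (lam : ℝ) (hlam : 0 < lam)
    (a : Fin (d + 1) → ℝ) (ha : ∀ i, 0 < a i)
    (W : (Fin (d + 1) → ℤ) → ℝ)
    (hW : ∀ z, W z = 1 + ∑ j, a j * Real.exp (-lam * (z j : ℝ))) :
    ∃ π : (Fin (d + 1) → ℤ) → ℝ,
      (∀ z, 0 < π z) ∧ Summable π ∧ (∑' z, π z) = 1 ∧
      -- stationarity: the mass at z comes from the up-jumps z - e_i → z and
      -- the down-jump z + (1,...,1) → z
      (∀ z : Fin (d + 1) → ℤ,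
        π z =
          (∑ i, π (fun j => z j - if j = i then 1 else 0) *
            (a i * Real.exp (-lam * ((z i : ℝ) - 1)) /
              W (fun j => z j - if j = i then 1 else 0))) +
          π (fun j => z j + 1) * (1 / W (fun j => z j + 1))) := by
  exact DCPR.main d lam hlam a ha W hW
end
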